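/- For all natural numbers k and l, the Hermite functions are orthonormal in L^2(ℝ): ∫_ℝ h_k(x) h_l(x) dx = δ_{kl}, where δ_{kl} is the Kronecker delta (equal to 1 if k = l and 0 otherwise). -/

import Mathlib

open Real MeasureTheory
open Polynomial

/-- The `k`-th physicists' Hermite polynomial (as a function):
`H_k(x) = (-1)^k e^{x²} (d^k/dx^k) e^{-x²}`. -/
noncomputable def hermitePoly (k : ℕ) (x : ℝ) : ℝ :=
  (-1 : ℝ) ^ k * Real.exp (x ^ 2) * iteratedDeriv k (fun y : ℝ => Real.exp (-y ^ 2)) x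

/-- The `k`-th Hermite function `h_k(x) = (2^k k! √π)^{-1/2} H_k(x) e^{-x²/2}`. -/
noncomputable def hermiteFun (k : ℕ) (x : ℝ) : ℝ :=
  (Real.sqrt (2 ^ k * (Nat.factorial k) * Real.sqrt π))⁻¹ * hermitePoly k x *
    Real.exp (-x ^ 2 / 2)


noncomputable def Hp : ℕ → Polynomial ℝ
  | 0 => 1
  | (n+1) => 2 * (X * Hp n) - derivative (Hp n)

lemma gauss_deriv (x : ℝ) : HasDerivAt (fun y : ℝ => Real.exp (-y ^ 2)) (-2 * x * Real.exp (-x ^ 2)) x := by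
  have h : HasDerivAt (fun y : ℝ => -y ^ 2) (-2 * x) x := by
    simpa using ((hasDerivAt_pow 2 x).fun_neg)
  simpa [mul_comm] using h.exp

lemma iteratedDeriv_gauss (n : ℕ) (x : ℝ) :
    iteratedDeriv n (fun y : ℝ => Real.exp (-y ^ 2)) x
      = (-1 : ℝ) ^ n * (Hp n).eval x * Real.exp (-x ^ 2) := by
  rw [iteratedDeriv_eq_iterate]
  induction n generalizing x with
  | zero => simp [Hp]
  | succ n ih =>
    have ih' : deriv^[n] (fun y : ℝ => Real.exp (-y ^ 2))
        = fun x => (-1 : ℝ) ^ n * (Hp n).eval x * Real.exp (-x ^ 2) := funext ih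
    rw [Function.iterate_succ_apply', ih']
    have h : HasDerivAt (fun x : ℝ => (-1 : ℝ) ^ n * (Hp n).eval x * Real.exp (-x ^ 2))
        ((-1 : ℝ) ^ (n+1) * (Hp (n+1)).eval x * Real.exp (-x ^ 2)) x := by
      have := (((Hp n).hasDerivAt x).const_mul ((-1:ℝ)^n)).fun_mul (gauss_deriv x)
      refine this.congr_deriv ?_
      simp only [Hp, eval_sub, eval_mul, eval_ofNat, eval_X, pow_succ]
      ring
    rw [h.deriv]

lemma natDegree_Hp (n : ℕ) : (Hp n).natDegree ≤ n := by
  induction n with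
  | zero => simp [Hp]
  | succ n ih =>
    refine (natDegree_sub_le _ _).trans (max_le ?_ ?_)
    · refine (natDegree_mul_le).trans ?_
      have : (X * Hp n).natDegree ≤ 1 + n :=
        natDegree_mul_le.trans (by simpa using add_le_add_left ih 1)
      simpa [add_comm] using this.trans_eq (by ring_nf)
    · exact (natDegree_derivative_le _).trans (by omega)

lemma coeff_Hp (n : ℕ) : (Hp n).coeff n = 2 ^ n := by
  induction n with
  | zero => simp [Hp]
  | succ n ih =>
    have h2 : (Hp n).coeff (n + 2) = 0 :=
      coeff_eq_zero_of_natDegree_lt (lt_of_le_of_lt (natDegree_Hp n) (by omega))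
    simp [Hp, coeff_derivative, coeff_X_mul, ih, h2, pow_succ]
    ring

lemma iterate_derivative_Hp (n : ℕ) :
    derivative^[n] (Hp n) = C ((2 : ℝ) ^ n * n.factorial) := by
  have hd : (derivative^[n] (Hp n)).natDegree = 0 :=
    Nat.le_zero.mp (le_trans (natDegree_iterate_derivative _ _) (by have := natDegree_Hp n; omega))
  rw [eq_C_of_natDegree_le_zero hd.le]
  congr 1
  rw [coeff_iterate_derivative, zero_add, coeff_Hp, Nat.descFactorial_self]
  simp [mul_comm]

lemma integrable_poly_gauss (p : Polynomial ℝ) :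
    Integrable fun x : ℝ => p.eval x * Real.exp (-x ^ 2) := by
  induction p using Polynomial.induction_on' with
  | add p q hp hq => simpa [add_mul] using hp.fun_add hq
  | monomial n a =>
    have h : Integrable fun x : ℝ => x ^ n * Real.exp (-x ^ 2) := by
      have := integrable_rpow_mul_exp_neg_mul_sq (b := 1) one_pos
        (s := (n : ℝ)) (lt_of_lt_of_le (by norm_num) (Nat.cast_nonneg n))
      simpa [Real.rpow_natCast] using this
    simpa [eval_monomial, mul_assoc] using h.const_mul a

lemma integrable_poly_iD (p : Polynomial ℝ) (m : ℕ) :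
    Integrable fun x : ℝ => p.eval x * iteratedDeriv m (fun y : ℝ => Real.exp (-y ^ 2)) x := by
  have : (fun x : ℝ => p.eval x * iteratedDeriv m (fun y : ℝ => Real.exp (-y ^ 2)) x)
      = fun x => (-1 : ℝ) ^ m * ((p * Hp m).eval x * Real.exp (-x ^ 2)) := by
    funext x; rw [iteratedDeriv_gauss]; simp; ring
  rw [this]
  exact (integrable_poly_gauss (p * Hp m)).const_mul _

lemma hasDerivAt_iD (m : ℕ) (x : ℝ) :
    HasDerivAt (iteratedDeriv m (fun y : ℝ => Real.exp (-y ^ 2)))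
      (iteratedDeriv (m+1) (fun y : ℝ => Real.exp (-y ^ 2)) x) x := by
  have he : iteratedDeriv m (fun y : ℝ => Real.exp (-y ^ 2))
      = fun x => (-1 : ℝ) ^ m * (Hp m).eval x * Real.exp (-x ^ 2) := funext (iteratedDeriv_gauss m)
  have hdiff : Differentiable ℝ (iteratedDeriv m (fun y : ℝ => Real.exp (-y ^ 2))) := by
    rw [he]
    exact ((differentiable_const _).mul (Hp m).differentiable).mul
      (Differentiable.exp (by fun_prop))
  have := (hdiff x).hasDerivAt
  rwa [← iteratedDeriv_succ] at this

lemma ibp_step (p : Polynomial ℝ) (m : ℕ) :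
    ∫ x : ℝ, p.eval x * iteratedDeriv (m+1) (fun y : ℝ => Real.exp (-y ^ 2)) x
      = - ∫ x : ℝ, (derivative p).eval x * iteratedDeriv m (fun y : ℝ => Real.exp (-y ^ 2)) x := by
  exact MeasureTheory.integral_mul_deriv_eq_deriv_mul_of_integrable
    (fun x _ => p.hasDerivAt x) (fun x _ => hasDerivAt_iD m x)
    (integrable_poly_iD p (m+1)) (integrable_poly_iD (derivative p) m) (integrable_poly_iD p m)

lemma ibp_iter (l : ℕ) (p : Polynomial ℝ) :
    ∫ x : ℝ, p.eval x * iteratedDeriv l (fun y : ℝ => Real.exp (-y ^ 2)) x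
      = (-1 : ℝ) ^ l * ∫ x : ℝ, (derivative^[l] p).eval x * Real.exp (-x ^ 2) := by
  induction l generalizing p with
  | zero => simp [iteratedDeriv_zero]
  | succ l ih =>
    rw [ibp_step p l, ih (derivative p), ← Function.iterate_succ_apply, pow_succ]
    ring

lemma key (k l : ℕ) :
    ∫ x : ℝ, (Hp k).eval x * ((Hp l).eval x * Real.exp (-x ^ 2))
      = ∫ x : ℝ, (derivative^[l] (Hp k)).eval x * Real.exp (-x ^ 2) := by
  have h : ∀ x : ℝ, (Hp k).eval x * ((Hp l).eval x * Real.exp (-x ^ 2))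
      = (-1 : ℝ) ^ l * ((Hp k).eval x * iteratedDeriv l (fun y : ℝ => Real.exp (-y ^ 2)) x) := by
    intro x
    rw [iteratedDeriv_gauss]
    have h1 : ((-1 : ℝ) ^ l) * ((-1 : ℝ) ^ l) = 1 := by
      rw [← pow_add]; exact Even.neg_one_pow ⟨l, by ring⟩
    linear_combination (- (eval x (Hp k) * eval x (Hp l) * Real.exp (-x ^ 2))) * h1
  simp_rw [h]
  rw [integral_const_mul, ibp_iter, ← mul_assoc]
  have : ((-1 : ℝ) ^ l) * ((-1 : ℝ) ^ l) = 1 := by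
    rw [← pow_add]; exact Even.neg_one_pow ⟨l, by ring⟩
  rw [this, one_mul]

lemma integral_gauss' : ∫ x : ℝ, Real.exp (-x ^ 2) = Real.sqrt π := by
  have := integral_gaussian 1
  simpa using this

lemma core (k l : ℕ) :
    ∫ x : ℝ, (Hp k).eval x * ((Hp l).eval x * Real.exp (-x ^ 2))
      = if k = l then (2 : ℝ) ^ k * k.factorial * Real.sqrt π else 0 := by
  rcases lt_trichotomy k l with h | h | h
  · rw [key, iterate_derivative_eq_zero (lt_of_le_of_lt (natDegree_Hp k) h), if_neg h.ne]
    simp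
  · subst h
    rw [key, iterate_derivative_Hp, if_pos rfl]
    simp_rw [eval_C]
    rw [integral_const_mul, integral_gauss', mul_assoc]
  · have hc : ∀ x : ℝ, (Hp k).eval x * ((Hp l).eval x * Real.exp (-x ^ 2))
        = (Hp l).eval x * ((Hp k).eval x * Real.exp (-x ^ 2)) := fun x => by ring
    simp_rw [hc]
    rw [key, iterate_derivative_eq_zero (lt_of_le_of_lt (natDegree_Hp l) h), if_neg h.ne']
    simp

lemma hermitePoly_eq (k : ℕ) (x : ℝ) : hermitePoly k x = (Hp k).eval x := by
  rw [hermitePoly, iteratedDeriv_gauss]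
  have h1 : ((-1 : ℝ) ^ k) * ((-1 : ℝ) ^ k) = 1 := by
    rw [← pow_add]; exact Even.neg_one_pow ⟨k, by ring⟩
  have h2 : Real.exp (x ^ 2) * Real.exp (-x ^ 2) = 1 := by
    rw [← Real.exp_add]; simp
  linear_combination (eval x (Hp k) * (Real.exp (x^2) * Real.exp (-x^2))) * h1 + (eval x (Hp k)) * h2


theorem hermiteFun_orthonormal (k l : ℕ) :
    ∫ x : ℝ, hermiteFun k x * hermiteFun l x = if k = l then (1 : ℝ) else 0 := by
  have hprod : ∀ x : ℝ, hermiteFun k x * hermiteFun l x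
      = (Real.sqrt (2 ^ k * (Nat.factorial k) * Real.sqrt π))⁻¹ *
        ((Real.sqrt (2 ^ l * (Nat.factorial l) * Real.sqrt π))⁻¹ *
          ((Hp k).eval x * ((Hp l).eval x * Real.exp (-x ^ 2)))) := by
    intro x
    rw [hermiteFun, hermiteFun, hermitePoly_eq, hermitePoly_eq]
    have h2 : Real.exp (-x ^ 2 / 2) * Real.exp (-x ^ 2 / 2) = Real.exp (-x ^ 2) := by
      rw [← Real.exp_add]; ring_nf
    linear_combination ((Real.sqrt (2 ^ k * (Nat.factorial k) * Real.sqrt π))⁻¹ * (Real.sqrt (2 ^ l * (Nat.factorial l) * Real.sqrt π))⁻¹ * eval x (Hp k) * eval x (Hp l)) * h2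
  simp_rw [hprod]
  rw [integral_const_mul, integral_const_mul, core]
  by_cases h : k = l
  · subst h
    rw [if_pos rfl, if_pos rfl]
    have hpos : (0 : ℝ) < 2 ^ k * (Nat.factorial k) * Real.sqrt π := by
      have : (0:ℝ) < Real.sqrt π := Real.sqrt_pos.mpr Real.pi_pos
      positivity
    rw [← mul_assoc, ← mul_inv]
    rw [Real.mul_self_sqrt hpos.le]
    exact inv_mul_cancel₀ hpos.ne'
  · rw [if_neg h, if_neg h]; ring
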